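/- arXiv:1806.05534 — 2 statements merged into one kernel-verified Lean document; each statement's English description precedes it below -/
import Mathlib

section
/- Let Θ be a bounded analytic function on ℂ₊ with unimodular boundary values on ℝ that is analytic on a neighborhood of ℝ, such that |Θ(x+h) − Θ(x)| ≤ M|h| for all real x, h. Then the derivative Θ' is bounded by M on all of ℂ₊, i.e. Θ' ∈ H^∞(ℂ₊) with ‖Θ'‖ ≤ M. -/
open MeasureTheory Complex Filter Topology Set

noncomputable section

/-- L²(ℝ) of complex-valued functions. -/
abbrev L2R : Type := Lp ℂ 2 (volume : Measure ℝ)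

/-- The upper half-plane. -/
def UHP : Set ℂ := {z : ℂ | 0 < z.im}

/-- A meromorphic inner function: analytic on an open set containing the closed upper
half-plane (this encodes the analytic continuation across ℝ available for meromorphic
inner functions), bounded by 1 on ℂ₊, and unimodular on ℝ. -/
def IsMIF (Θ : ℂ → ℂ) : Prop :=
  (∃ S : Set ℂ, IsOpen S ∧ {z : ℂ | 0 ≤ z.im} ⊆ S ∧ DifferentiableOn ℂ Θ S) ∧
    (∀ z : ℂ, 0 < z.im → ‖Θ z‖ ≤ 1) ∧ (∀ x : ℝ, ‖Θ (x : ℂ)‖ = 1)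

/-- Membership in the Hardy space H²(ℂ₊), described via boundary values: `f ∈ L²(ℝ)` is
the a.e. vertical boundary limit of an analytic function on ℂ₊ with uniformly bounded
L² means on horizontal lines. -/
def MemH2 (f : L2R) : Prop :=
  ∃ F : ℂ → ℂ, DifferentiableOn ℂ F UHP ∧
    (∃ C : ℝ, ∀ y : ℝ, 0 < y → (∫ x : ℝ, ‖F ((x : ℂ) + y * Complex.I)‖ ^ 2) ≤ C) ∧
    ∀ᵐ x : ℝ, Tendsto (fun y : ℝ => F ((x : ℂ) + y * Complex.I)) (𝓝[>] 0) (𝓝 (f x))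

/-- Membership in the model space K_Θ = H² ∩ Θ·conj(H²). -/
def MemKTheta (Θ : ℂ → ℂ) (f : L2R) : Prop :=
  MemH2 f ∧ ∃ h : L2R, MemH2 h ∧ ∀ᵐ x : ℝ, f x = Θ (x : ℂ) * (starRingEnd ℂ) (h x)

/-- C(ℝ̇): real-valued continuous functions on ℝ with equal finite limits at ±∞. -/
def MemCRdot (a : ℝ → ℝ) : Prop :=
  Continuous a ∧ ∃ l : ℝ, Tendsto a atTop (𝓝 l) ∧ Tendsto a atBot (𝓝 l)

/-- C(ℝ̇) for complex-valued functions. -/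
def MemCRdotC (a : ℝ → ℂ) : Prop :=
  Continuous a ∧ ∃ l : ℂ, Tendsto a atTop (𝓝 l) ∧ Tendsto a atBot (𝓝 l)

/-- `v` is the value at `x` of the Hilbert transform of `b` (principal value). -/
def HilbertAt (b : ℝ → ℝ) (x : ℝ) (v : ℝ) : Prop :=
  Tendsto (fun ε : ℝ =>
      (1 / Real.pi) * ∫ t in {t : ℝ | ε < |x - t|}, ((x - t)⁻¹ + t / (1 + t ^ 2)) * b t)
    (𝓝[>] 0) (𝓝 v)

/-- `bt` is (a.e.) the Hilbert transform of `b`. -/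
def IsHilbertTransform (b bt : ℝ → ℝ) : Prop := ∀ᵐ x : ℝ, HilbertAt b x (bt x)

/-- u ∈ H^∞ + C(ℝ̇): a.e. the sum of the boundary values of a bounded analytic function
on ℂ₊ and of a function in C(ℝ̇). -/
def MemHinfC (u : ℝ → ℂ) : Prop :=
  ∃ (h : ℂ → ℂ) (hb g : ℝ → ℂ),
    DifferentiableOn ℂ h UHP ∧ (∃ M : ℝ, ∀ z ∈ UHP, ‖h z‖ ≤ M) ∧
    (∀ᵐ x : ℝ, Tendsto (fun y : ℝ => h ((x : ℂ) + y * Complex.I)) (𝓝[>] 0) (𝓝 (hb x))) ∧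
    MemCRdotC g ∧ ∀ᵐ x : ℝ, u x = hb x + g x

/-- The quasicontinuous class QC = (H^∞+C(ℝ̇)) ∩ conj(H^∞+C(ℝ̇)). -/
def MemQC (u : ℝ → ℂ) : Prop :=
  MemHinfC u ∧ MemHinfC (fun x => (starRingEnd ℂ) (u x))

/-- `P` is the Riesz projection, i.e. the orthogonal projection of L²(ℝ) onto H². -/
def IsRieszProjection (P : L2R →L[ℂ] L2R) : Prop :=
  (∀ f : L2R, MemH2 (P f)) ∧ (∀ f : L2R, MemH2 f → P f = f) ∧
    ∀ f g : L2R, MemH2 g → (inner ℂ (f - P f) g : ℂ) = 0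

/-- `M` is the operator of multiplication by `u` on L². -/
def IsMult (u : ℝ → ℂ) (M : L2R →L[ℂ] L2R) : Prop :=
  ∀ f : L2R, (M f : ℝ → ℂ) =ᵐ[volume] fun x => u x * f x

/-- A continuous linear map is invertible (with continuous linear two-sided inverse). -/
def CLMInvertible {E F : Type*} [NormedAddCommGroup E] [NormedSpace ℂ E]
    [NormedAddCommGroup F] [NormedSpace ℂ F] (T : E →L[ℂ] F) : Prop :=
  ∃ S : F →L[ℂ] E, (∀ x, S (T x) = x) ∧ ∀ y, T (S y) = y

/-- An operator is unitary plus compact. -/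
def UnitaryPlusCompact {E : Type*} [NormedAddCommGroup E] [InnerProductSpace ℂ E]
    (T : E →L[ℂ] E) : Prop :=
  ∃ U K : E →L[ℂ] E, (∀ x y : E, (inner ℂ (U x) (U y) : ℂ) = inner ℂ x y) ∧
    Function.Surjective U ∧ IsCompactOperator (⇑K) ∧ T = U + K

/-- The Herglotz function G associated with the Clark measure Σ ν_k δ_{λ_k}. -/
def ClarkG (lam nu : ℕ → ℝ) (z : ℂ) : ℂ :=
  ∑' k : ℕ, (nu k : ℂ) * ((((lam k : ℝ) : ℂ) - z)⁻¹ - ((lam k : ℝ) : ℂ) / (((lam k : ℝ) : ℂ) ^ 2 + 1))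

/-- The Clark inner function I = (G - i)/(G + i). -/
def ClarkInner (lam nu : ℕ → ℝ) (z : ℂ) : ℂ :=
  (ClarkG lam nu z - Complex.I) / (ClarkG lam nu z + Complex.I)

/-- Separation condition inf (λ_{n+1} - λ_n) ≥ δ. -/
def Separated (lam : ℕ → ℝ) (δ : ℝ) : Prop := ∀ n : ℕ, lam n + δ ≤ lam (n + 1)

/-- The Levinson-type condition \sup_n |Σ_{k≠n} (1/(λ_n-λ_k) + λ_k/(λ_k²+1))| < ∞. -/
def Levinson (lam : ℕ → ℝ) : Prop :=
  ∃ C : ℝ, ∀ n : ℕ,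
    |∑' k : {k : ℕ // k ≠ n}, ((lam n - lam k)⁻¹ + lam k / ((lam k) ^ 2 + 1))| ≤ C

/-- Admissible Clark weights: positive, bounded, with Σ ν_k/(1+λ_k²) < ∞. -/
def ClarkWeights (lam nu : ℕ → ℝ) : Prop :=
  (∀ k, 0 < nu k) ∧ (∃ B : ℝ, ∀ k, nu k ≤ B) ∧
    Summable (fun k => nu k / (1 + (lam k) ^ 2))

/-- The normalized reproducing kernel of K_U at a real point l. -/
def normKernel (U : ℂ → ℂ) (l : ℝ) (z : ℂ) : ℂ :=
  (Complex.I / ((Real.sqrt (2 * Real.pi * ‖deriv U (l : ℂ)‖) : ℝ) : ℂ)) *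
    ((1 - (starRingEnd ℂ) (U ((l : ℝ) : ℂ)) * U z) / (z - ((l : ℝ) : ℂ)))

/-- η_n = |I'(λ_n)|^{1/2} |Θ'(λ_n)|^{-1/2}. -/
def eta (Inn Θ : ℂ → ℂ) (lam : ℕ → ℝ) (n : ℕ) : ℝ :=
  Real.sqrt ‖deriv Inn ((lam n : ℝ) : ℂ)‖ / Real.sqrt ‖deriv Θ ((lam n : ℝ) : ℂ)‖

/-- (x_n) is a Riesz sequence. -/
def RieszSeq {E : Type*} [NormedAddCommGroup E] [NormedSpace ℂ E] (x : ℕ → E) : Prop :=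
  ∃ c C : ℝ, 0 < c ∧ ∀ (s : Finset ℕ) (a : ℕ → ℂ),
    c * ∑ n ∈ s, ‖a n‖ ^ 2 ≤ ‖∑ n ∈ s, a n • x n‖ ^ 2 ∧
    ‖∑ n ∈ s, a n • x n‖ ^ 2 ≤ C * ∑ n ∈ s, ‖a n‖ ^ 2

/-- (x_n) is asymptotically orthonormal from rank N₀ on. -/
def AOSFrom {E : Type*} [NormedAddCommGroup E] [NormedSpace ℂ E] (x : ℕ → E) (N0 : ℕ) : Prop :=
  ∃ c C : ℕ → ℝ, Tendsto c atTop (𝓝 1) ∧ Tendsto C atTop (𝓝 1) ∧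
    ∀ N, N0 ≤ N → 0 < c N ∧ ∀ (s : Finset ℕ) (a : ℕ → ℂ), (∀ n ∈ s, N ≤ n) →
      c N * ∑ n ∈ s, ‖a n‖ ^ 2 ≤ ‖∑ n ∈ s, a n • x n‖ ^ 2 ∧
      ‖∑ n ∈ s, a n • x n‖ ^ 2 ≤ C N * ∑ n ∈ s, ‖a n‖ ^ 2

/-- Asymptotically orthonormal sequence. -/
def AOS {E : Type*} [NormedAddCommGroup E] [NormedSpace ℂ E] (x : ℕ → E) : Prop :=
  ∃ N0 : ℕ, AOSFrom x N0

/-- Asymptotically orthonormal basic sequence (AOS with N₀ the first index). -/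
def AOB {E : Type*} [NormedAddCommGroup E] [NormedSpace ℂ E] (x : ℕ → E) : Prop :=
  AOSFrom x 0

/-- Minimal sequence: no member lies in the closed span of the others. -/
def MinimalSeq {E : Type*} [NormedAddCommGroup E] [NormedSpace ℂ E] (x : ℕ → E) : Prop :=
  ∀ n : ℕ, x n ∉ closure ((Submodule.span ℂ (x '' {m : ℕ | m ≠ n}) : Submodule ℂ E) : Set E)

/-- cos of the angle between two subsets of a Hilbert space:
sup |⟨f,g⟩| / (‖f‖‖g‖) over nonzero f ∈ A, g ∈ B. -/
def cosAngleSet {E : Type*} [NormedAddCommGroup E] [InnerProductSpace ℂ E]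
    (A B : Set E) : ℝ :=
  sSup {r : ℝ | ∃ f ∈ A, f ≠ 0 ∧ ∃ g ∈ B, g ≠ 0 ∧ r = ‖(inner ℂ f g : ℂ)‖ / (‖f‖ * ‖g‖)}

/-- The subspace I·H² of L², described via boundary values. -/
def IHardySet (Inn : ℂ → ℂ) : Set L2R :=
  {g : L2R | ∃ h : L2R, MemH2 h ∧ ∀ᵐ x : ℝ, g x = Inn (x : ℂ) * h x}

/-- The Cayley transform / Blaschke factor φ(x) = (x-i)/(x+i) on ℝ. -/
def cayley (x : ℝ) : ℂ := ((x : ℂ) - Complex.I) / ((x : ℂ) + Complex.I)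

/-- a boundary Lipschitz estimate propagates to a derivative bound on ℂ₊. -/
theorem stmt_1 (Θ : ℂ → ℂ) (hΘ : IsMIF Θ) (M : ℝ)
    (hLip : ∀ x h : ℝ, ‖Θ ((x : ℂ) + (h : ℂ)) - Θ (x : ℂ)‖ ≤ M * |h|) :
    ∀ z : ℂ, 0 < z.im → ‖deriv Θ z‖ ≤ M := by
  obtain ⟨⟨S, hSo, hSsub, hSd⟩, hb1, _hmod⟩ := hΘ
  -- bound on Θ on closed half-plane
  have hbdd : ∀ z : ℂ, 0 ≤ z.im → ‖Θ z‖ ≤ 1 := by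
    intro z hz
    rcases lt_or_eq_of_le hz with h | h
    · exact hb1 z h
    · have : z = ((z.re : ℝ) : ℂ) := by
        apply Complex.ext <;> simp [← h]
      rw [this, _hmod z.re]
  -- KEY: Lipschitz bound propagates to the half-plane
  have key : ∀ (h : ℝ) (z : ℂ), 0 < z.im → ‖Θ (z + (h : ℂ)) - Θ z‖ ≤ M * |h| := by
    intro h z hz
    set g : ℂ → ℂ := fun w => Θ (Complex.I * w + (h : ℂ)) - Θ (Complex.I * w) with hg
    have hmap : ∀ w : ℂ, 0 ≤ w.re → (0 ≤ (Complex.I * w + (h:ℂ)).im ∧ 0 ≤ (Complex.I * w).im) := by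
      intro w hw; constructor <;> simp [hw]
    have hd : DiffContOnCl ℂ g {w : ℂ | 0 < w.re} := by
      apply DifferentiableOn.diffContOnCl
      have hcl : closure {w : ℂ | 0 < w.re} ⊆ {w : ℂ | 0 ≤ w.re} := by
        have : {w : ℂ | 0 ≤ w.re} = Complex.re ⁻¹' Ici 0 := rfl
        rw [this]
        refine closure_minimal ?_ (isClosed_Ici.preimage Complex.continuous_re)
        intro w hw
        exact Set.mem_preimage.2 (Set.mem_Ici.2 (le_of_lt hw))
      apply DifferentiableOn.mono _ hcl
      apply DifferentiableOn.sub
      · exact (hSd.comp ((differentiable_id.const_mul _).add_const _).differentiableOn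
          (fun w hw => hSsub (by simpa using (hmap w hw).1)))
      · exact (hSd.comp (differentiable_id.const_mul _).differentiableOn
          (fun w hw => hSsub (by simpa using (hmap w hw).2)))
    have hbound2 : ∀ w : ℂ, 0 ≤ w.re → ‖g w‖ ≤ 2 := by
      intro w hw
      calc ‖g w‖ ≤ ‖Θ (Complex.I * w + (h:ℂ))‖ + ‖Θ (Complex.I * w)‖ := norm_sub_le _ _
        _ ≤ 1 + 1 := add_le_add (hbdd _ (hmap w hw).1) (hbdd _ (hmap w hw).2)
        _ = 2 := by norm_num
    have hPL : ∀ w : ℂ, 0 ≤ w.re → ‖g w‖ ≤ M * |h| := by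
      intro w hw
      refine PhragmenLindelof.right_half_plane_of_bounded_on_real hd ?_ ?_ ?_ hw
      · refine ⟨1, by norm_num, 0, ?_⟩
        apply Asymptotics.IsBigO.of_bound 2
        filter_upwards [eventually_inf_principal.2 (Eventually.of_forall (fun w hw => hw))]
          with w hw
        simpa using hbound2 w (le_of_lt hw)
      · refine isBoundedUnder_of_eventually_le (a := 2) ?_
        filter_upwards [eventually_ge_atTop (0:ℝ)] with x hx
        exact hbound2 _ (by simpa using hx)
      · intro y
        have e1 : Complex.I * ((y:ℂ) * Complex.I) + (h:ℂ) = (((-y : ℝ):ℂ)) + ((h:ℝ):ℂ) := by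
          push_cast; ring_nf; rw [Complex.I_sq]; ring
        have e2 : Complex.I * ((y:ℂ) * Complex.I) = (((-y : ℝ):ℂ)) := by
          push_cast; ring_nf; rw [Complex.I_sq]; ring
        simpa [g, e1, e2] using hLip (-y) h
    have e3 : g (-(Complex.I * z)) = Θ (z + (h:ℂ)) - Θ z := by
      have : Complex.I * -(Complex.I * z) = z := by
        ring_nf; rw [Complex.I_sq]; ring
      simp [g, this]
    have hre : 0 ≤ (-(Complex.I * z)).re := by simpa using le_of_lt hz
    calc ‖Θ (z + (h:ℂ)) - Θ z‖ = ‖g (-(Complex.I * z))‖ := by rw [e3]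
      _ ≤ M * |h| := hPL _ hre
  -- now the derivative bound
  intro z hz
  have hzS : S ∈ 𝓝 z := hSo.mem_nhds (hSsub (le_of_lt hz))
  have hder : HasDerivAt Θ (deriv Θ z) z :=
    ((hSd.differentiableAt hzS)).hasDerivAt
  have htend : Tendsto (fun t : ℝ => (Θ (z + (t:ℂ)) - Θ z) / (t:ℂ)) (𝓝[>] 0)
      (𝓝 (deriv Θ z)) := by
    have h1 : Tendsto (fun t : ℝ => ((t:ℂ))) (𝓝[>] 0) (𝓝[≠] (0:ℂ)) := by
      apply tendsto_nhdsWithin_of_tendsto_nhds_of_eventually_within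
      · exact tendsto_nhdsWithin_of_tendsto_nhds (by exact_mod_cast Complex.continuous_ofReal.tendsto 0)
      · filter_upwards [self_mem_nhdsWithin] with t ht
        simpa using Complex.ofReal_ne_zero.mpr (ne_of_gt ht)
    have h2 := (hasDerivAt_iff_tendsto_slope_zero.mp hder).comp h1
    simpa [smul_eq_mul, div_eq_inv_mul, Function.comp_def] using h2
  refine le_of_tendsto htend.norm ?_
  filter_upwards [self_mem_nhdsWithin] with t ht
  have : ‖Θ (z + (t:ℂ)) - Θ z‖ ≤ M * |t| := key t z hz
  have htn : ‖(t:ℂ)‖ = t := by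
    rw [Complex.norm_real, Real.norm_eq_abs, abs_of_pos ht]
  rw [norm_div, htn, div_le_iff₀ ht]
  simpa [abs_of_pos (show (0:ℝ) < t from ht)] using this

end
end

section
/- A sequence (x_n)_{n≥1} in a Hilbert space ℋ is an asymptotically orthonormal basic sequence (AOB) if and only if it is both an asymptotically orthonormal sequence (AOS) and a Riesz sequence; equivalently, if and only if it is minimal and an AOS. -/
open MeasureTheory Complex Filter Topology Set

noncomputable section

section Aux


variable {E : Type*} [NormedAddCommGroup E] [NormedSpace ℂ E]

/-- Per-coordinate bound from the distance to the span of the other vectors. -/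
lemma coord_bound (x : ℕ → E) (n : ℕ) (s : Finset ℕ) (hn : n ∈ s) (a : ℕ → ℂ) :
    ‖a n‖ * Metric.infDist (x n)
        ((Submodule.span ℂ (x '' {m : ℕ | m ≠ n}) : Submodule ℂ E) : Set E)
      ≤ ‖∑ m ∈ s, a m • x m‖ := by
  by_cases ha : a n = 0
  · simp [ha]
  · set S := ((Submodule.span ℂ (x '' {m : ℕ | m ≠ n}) : Submodule ℂ E) : Set E)
    set g := ∑ m ∈ s.erase n, a m • x m with hg
    have hsum : ∑ m ∈ s, a m • x m = a n • x n + g := (Finset.add_sum_erase s _ hn).symm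
    have hgS : g ∈ Submodule.span ℂ (x '' {m : ℕ | m ≠ n}) :=
      Submodule.sum_mem _ fun m hm => Submodule.smul_mem _ _
        (Submodule.subset_span ⟨m, Finset.ne_of_mem_erase hm, rfl⟩)
    have hwS : (-((a n)⁻¹ • g)) ∈ S :=
      Submodule.neg_mem _ (Submodule.smul_mem _ _ hgS)
    have hd : Metric.infDist (x n) S ≤ dist (x n) (-((a n)⁻¹ • g)) :=
      Metric.infDist_le_dist_of_mem hwS
    have hkey : dist (x n) (-((a n)⁻¹ • g)) = ‖x n + (a n)⁻¹ • g‖ := by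
      rw [dist_eq_norm, sub_neg_eq_add]
    have hfac : a n • (x n + (a n)⁻¹ • g) = a n • x n + g := by
      rw [smul_add, smul_smul, mul_inv_cancel₀ ha, one_smul]
    calc ‖a n‖ * Metric.infDist (x n) S
        ≤ ‖a n‖ * ‖x n + (a n)⁻¹ • g‖ := by
          exact mul_le_mul_of_nonneg_left (hkey ▸ hd) (norm_nonneg _)
      _ = ‖a n • (x n + (a n)⁻¹ • g)‖ := (norm_smul _ _).symm
      _ = ‖∑ m ∈ s, a m • x m‖ := by rw [hfac, hsum]

lemma aob_aos {x : ℕ → E} (h : AOB x) : AOS x := ⟨0, h⟩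

lemma aob_riesz {x : ℕ → E} (h : AOB x) : RieszSeq x := by
  obtain ⟨c, C, _, _, h⟩ := h
  obtain ⟨hc, hb⟩ := h 0 le_rfl
  exact ⟨c 0, C 0, hc, fun s a => hb s a fun n _ => Nat.zero_le n⟩

lemma riesz_minimal {x : ℕ → E} (h : RieszSeq x) : MinimalSeq x := by
  obtain ⟨c, C, hc, hbd⟩ := h
  intro n hn
  obtain ⟨y, hy, hdy⟩ := Metric.mem_closure_iff.1 hn (Real.sqrt c) (Real.sqrt_pos.2 hc)
  have hy' : y ∈ Submodule.span ℂ (x '' {m : ℕ | m ≠ n}) := hy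
  rw [Finsupp.mem_span_image_iff_linearCombination] at hy'
  obtain ⟨l, hlsupp, hl⟩ := hy'
  have hlsupp' : (l.support : Set ℕ) ⊆ {m : ℕ | m ≠ n} := hlsupp
  set a : ℕ → ℂ := fun m => if m = n then 1 else -l m with ha
  have hnsupp : n ∉ l.support := fun h => (hlsupp' h) rfl
  have hl' : ∑ m ∈ l.support, l m • x m = y := by
    rw [← hl, Finsupp.linearCombination_apply, Finsupp.sum]
  have hsum : ∑ m ∈ insert n l.support, a m • x m = x n - y := by
    rw [Finset.sum_insert hnsupp]
    have h1 : a n = 1 := if_pos rfl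
    have h2 : ∑ m ∈ l.support, a m • x m = -∑ m ∈ l.support, l m • x m := by
      rw [← Finset.sum_neg_distrib]
      exact Finset.sum_congr rfl fun m hm => by
        rw [ha]; simp only [if_neg (hlsupp' hm)]; rw [neg_smul]
    rw [h1, h2, hl', one_smul, sub_eq_add_neg]
  have hlow := (hbd (insert n l.support) a).1
  have hone : (1 : ℝ) ≤ ∑ m ∈ insert n l.support, ‖a m‖ ^ 2 := by
    have := Finset.single_le_sum (f := fun m => ‖a m‖ ^ 2)
      (fun i _ => by positivity) (Finset.mem_insert_self n l.support)
    simpa [ha] using this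
  have hsq : ‖x n - y‖ ^ 2 < c := by
    have h1 : ‖x n - y‖ < Real.sqrt c := by rwa [dist_eq_norm] at hdy
    have := pow_lt_pow_left₀ h1 (norm_nonneg _) two_ne_zero
    rwa [Real.sq_sqrt hc.le] at this
  rw [hsum] at hlow
  nlinarith [hlow, hsq, hone, hc]

lemma arith_pos (D T cN : ℝ) (hD : 0 ≤ D) (hT : 0 ≤ T) (hc : 0 < cN) :
    0 < D + cN⁻¹ * (2 + 2 * T * D) := by
  have h1 : 0 ≤ T * D := mul_nonneg hT hD
  have h2 : 0 < cN⁻¹ := inv_pos.2 hc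
  have h3 : 0 < cN⁻¹ * (2 + 2 * T * D) := mul_pos h2 (by linarith)
  linarith

lemma arith_lower (D T cN A₁ A₂ F G₁ G₂ : ℝ) (hD : 0 ≤ D) (hT : 0 ≤ T) (hc : 0 < cN)
    (hA₂nn : 0 ≤ A₂) (hG₂nn : 0 ≤ G₂)
    (hA1 : A₁ ≤ D * F ^ 2) (hG1 : G₁ ^ 2 ≤ T * A₁) (hlow : cN * A₂ ≤ G₂ ^ 2)
    (hG2 : G₂ ≤ F + G₁) :
    (D + cN⁻¹ * (2 + 2 * T * D))⁻¹ * (A₁ + A₂) ≤ F ^ 2 := by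
  rw [inv_mul_le_iff₀ (arith_pos D T cN hD hT hc)]
  have e0 : G₂ ^ 2 ≤ (F + G₁) ^ 2 := pow_le_pow_left₀ hG₂nn hG2 2
  have hTA : T * A₁ ≤ T * (D * F ^ 2) := mul_le_mul_of_nonneg_left hA1 hT
  have e1 : G₂ ^ 2 ≤ 2 * F ^ 2 + 2 * T * D * F ^ 2 := by
    nlinarith [sq_nonneg (F - G₁), hG1, hTA, e0]
  have e2 : A₂ ≤ cN⁻¹ * (2 * F ^ 2 + 2 * T * D * F ^ 2) := by
    have heq : A₂ = cN⁻¹ * (cN * A₂) := by field_simp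
    rw [heq]
    exact mul_le_mul_of_nonneg_left (hlow.trans e1) (by positivity)
  have hring : (D + cN⁻¹ * (2 + 2 * T * D)) * F ^ 2
      = D * F ^ 2 + cN⁻¹ * (2 * F ^ 2 + 2 * T * D * F ^ 2) := by ring
  linarith [hA1, e2]

lemma arith_upper (T CN A₁ A₂ F G₁ G₂ : ℝ) (hT : 0 ≤ T) (hA₁nn : 0 ≤ A₁)
    (hA₂nn : 0 ≤ A₂) (hFnn : 0 ≤ F)
    (hG1 : G₁ ^ 2 ≤ T * A₁) (hup : G₂ ^ 2 ≤ CN * A₂) (hF : F ≤ G₁ + G₂) :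
    F ^ 2 ≤ (2 * T + 2 * |CN|) * (A₁ + A₂) := by
  have hf2 : F ^ 2 ≤ 2 * G₁ ^ 2 + 2 * G₂ ^ 2 := by
    nlinarith [sq_nonneg (G₁ - G₂), pow_le_pow_left₀ hFnn hF 2]
  have h1 : CN * A₂ ≤ |CN| * A₂ := mul_le_mul_of_nonneg_right (le_abs_self CN) hA₂nn
  have h2 : 0 ≤ |CN| * A₁ := mul_nonneg (abs_nonneg CN) hA₁nn
  have h3 : 0 ≤ T * A₂ := mul_nonneg hT hA₂nn
  nlinarith [hG1, hup, h1, h2, h3, hf2]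

lemma minimal_aos_riesz {x : ℕ → E} (hmin : MinimalSeq x) (h : AOS x) : RieszSeq x := by
  obtain ⟨N0, c, C, _, _, hN⟩ := h
  obtain ⟨hcpos, hbd⟩ := hN N0 le_rfl
  set d : ℕ → ℝ := fun n => Metric.infDist (x n)
      ((Submodule.span ℂ (x '' {m : ℕ | m ≠ n}) : Submodule ℂ E) : Set E) with hd_def
  have hd : ∀ n, 0 < d n := by
    intro n
    rcases (Metric.infDist_nonneg (x := x n)
      (s := ((Submodule.span ℂ (x '' {m : ℕ | m ≠ n}) : Submodule ℂ E) : Set E))).lt_or_eq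
      with h' | h'
    · exact h'
    · exact absurd ((Metric.mem_closure_iff_infDist_zero
        ⟨0, Submodule.zero_mem _⟩).2 h'.symm) (hmin n)
  set D : ℝ := ∑ m ∈ Finset.range N0, ((d m)⁻¹) ^ 2 with hD_def
  set T : ℝ := ∑ m ∈ Finset.range N0, ‖x m‖ ^ 2 with hT_def
  have hD : 0 ≤ D := Finset.sum_nonneg fun m _ => by positivity
  have hT : 0 ≤ T := Finset.sum_nonneg fun m _ => by positivity
  refine ⟨(D + (c N0)⁻¹ * (2 + 2 * T * D))⁻¹, 2 * T + 2 * |C N0|,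
    inv_pos.2 (arith_pos D T (c N0) hD hT hcpos), ?_⟩
  intro s a
  set s₁ := s.filter (fun m => m < N0) with hs₁
  set s₂ := s.filter (fun m => ¬ m < N0) with hs₂
  set f := ∑ m ∈ s, a m • x m with hf
  set g₁ := ∑ m ∈ s₁, a m • x m with hg₁
  set g₂ := ∑ m ∈ s₂, a m • x m with hg₂
  set A₁ := ∑ m ∈ s₁, ‖a m‖ ^ 2 with hA₁def
  set A₂ := ∑ m ∈ s₂, ‖a m‖ ^ 2 with hA₂def
  have hA₁nn : 0 ≤ A₁ := Finset.sum_nonneg fun m _ => by positivity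
  have hA₂nn : 0 ≤ A₂ := Finset.sum_nonneg fun m _ => by positivity
  have hsplit : g₁ + g₂ = f := Finset.sum_filter_add_sum_filter_not s _ _
  have hAsum : ∑ m ∈ s, ‖a m‖ ^ 2 = A₁ + A₂ :=
    (Finset.sum_filter_add_sum_filter_not s _ _).symm
  have hA1bound : A₁ ≤ D * ‖f‖ ^ 2 := by
    have step : ∀ m ∈ s₁, ‖a m‖ ^ 2 ≤ ((d m)⁻¹) ^ 2 * ‖f‖ ^ 2 := by
      intro m hm
      have hms : m ∈ s := (Finset.mem_filter.1 hm).1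
      have hcoord : ‖a m‖ * d m ≤ ‖f‖ := coord_bound x m s hms a
      have h2 : (‖a m‖ * d m) ^ 2 ≤ ‖f‖ ^ 2 :=
        pow_le_pow_left₀ (mul_nonneg (norm_nonneg _) (hd m).le) hcoord 2
      have heq : ‖a m‖ ^ 2 = ((d m)⁻¹) ^ 2 * (‖a m‖ * d m) ^ 2 := by
        field_simp
        rw [mul_div_assoc, div_self (hd m).ne', mul_one]
      rw [heq]
      exact mul_le_mul_of_nonneg_left h2 (by positivity)
    calc A₁ ≤ ∑ m ∈ s₁, ((d m)⁻¹) ^ 2 * ‖f‖ ^ 2 := Finset.sum_le_sum step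
      _ = (∑ m ∈ s₁, ((d m)⁻¹) ^ 2) * ‖f‖ ^ 2 := (Finset.sum_mul _ _ _).symm
      _ ≤ D * ‖f‖ ^ 2 := by
          refine mul_le_mul_of_nonneg_right ?_ (by positivity)
          refine Finset.sum_le_sum_of_subset_of_nonneg ?_ fun m _ _ => by positivity
          intro m hm
          exact Finset.mem_range.2 (Finset.mem_filter.1 hm).2
  have hsub1 : s₁ ⊆ Finset.range N0 := fun m hm =>
    Finset.mem_range.2 (Finset.mem_filter.1 hm).2
  have hG1 : ‖g₁‖ ^ 2 ≤ T * A₁ := by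
    have h1 : ‖g₁‖ ≤ ∑ m ∈ s₁, ‖x m‖ * ‖a m‖ := by
      refine (norm_sum_le _ _).trans (le_of_eq (Finset.sum_congr rfl fun m _ => ?_))
      rw [norm_smul, mul_comm]
    have h2 : (∑ m ∈ s₁, ‖x m‖ * ‖a m‖) ^ 2 ≤ (∑ m ∈ s₁, ‖x m‖ ^ 2) * A₁ :=
      Finset.sum_mul_sq_le_sq_mul_sq _ _ _
    have h3 : ∑ m ∈ s₁, ‖x m‖ ^ 2 ≤ T :=
      Finset.sum_le_sum_of_subset_of_nonneg hsub1 fun m _ _ => by positivity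
    calc ‖g₁‖ ^ 2 ≤ (∑ m ∈ s₁, ‖x m‖ * ‖a m‖) ^ 2 :=
          pow_le_pow_left₀ (norm_nonneg _) h1 2
      _ ≤ (∑ m ∈ s₁, ‖x m‖ ^ 2) * A₁ := h2
      _ ≤ T * A₁ := mul_le_mul_of_nonneg_right h3 hA₁nn
  have hs₂large : ∀ m ∈ s₂, N0 ≤ m := fun m hm =>
    le_of_not_gt (Finset.mem_filter.1 hm).2
  obtain ⟨hlow₂, hup₂⟩ := hbd s₂ a hs₂large
  have hG2 : ‖g₂‖ ≤ ‖f‖ + ‖g₁‖ := by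
    have hq : g₂ = f - g₁ := by rw [← hsplit]; abel
    rw [hq]; exact norm_sub_le _ _
  have hfle : ‖f‖ ≤ ‖g₁‖ + ‖g₂‖ := by rw [← hsplit]; exact norm_add_le _ _
  rw [hAsum]
  exact ⟨arith_lower D T (c N0) A₁ A₂ ‖f‖ ‖g₁‖ ‖g₂‖ hD hT hcpos hA₂nn (norm_nonneg _)
      hA1bound hG1 hlow₂ hG2,
    arith_upper T (C N0) A₁ A₂ ‖f‖ ‖g₁‖ ‖g₂‖ hT hA₁nn hA₂nn (norm_nonneg _)
      hG1 hup₂ hfle⟩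

lemma aos_riesz_aob {x : ℕ → E} (hA : AOS x) (hR : RieszSeq x) : AOB x := by
  obtain ⟨N0, c, C, hct, hCt, h⟩ := hA
  obtain ⟨c0, C0, hc0, hbd⟩ := hR
  refine ⟨fun N => if N < N0 then c0 else c N,
    fun N => if N < N0 then C0 else C N, ?_, ?_, ?_⟩
  · refine Tendsto.congr' ?_ hct
    filter_upwards [eventually_ge_atTop N0] with N hN
    rw [if_neg (not_lt.2 hN)]
  · refine Tendsto.congr' ?_ hCt
    filter_upwards [eventually_ge_atTop N0] with N hN
    rw [if_neg (not_lt.2 hN)]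
  · intro N _
    by_cases hN : N < N0
    · simp only [if_pos hN]
      exact ⟨hc0, fun s a _ => hbd s a⟩
    · simp only [if_neg hN]
      exact h N (not_lt.1 hN)

end Aux

/-- (xₙ) is an AOB iff it is an AOS and a Riesz sequence, iff it is
minimal and an AOS. -/
theorem stmt_19 {E : Type*} [NormedAddCommGroup E] [InnerProductSpace ℂ E] (x : ℕ → E) :
    (AOB x ↔ (AOS x ∧ RieszSeq x)) ∧ (AOB x ↔ (MinimalSeq x ∧ AOS x)) :=
  ⟨⟨fun h => ⟨aob_aos h, aob_riesz h⟩, fun h => aos_riesz_aob h.1 h.2⟩,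
   ⟨fun h => ⟨riesz_minimal (aob_riesz h), aob_aos h⟩,
    fun h => aos_riesz_aob h.2 (minimal_aos_riesz h.1 h.2)⟩⟩
end
end
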